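/- Sandwich property of conditional inverses: let F : M → M be local, increasing, and respect a.e. equality, let G_l, G_r be a conditional left-inverse and a conditional right-inverse of F, and let G be any conditional inverse of F. Then for every s ∈ M: G_l(s) ≤ G(s) ≤ G_r(s) a.e.; moreover the left-continuous version of G agrees a.e. with G_l(s) and the right-continuous version of G agrees a.e. with G_r(s), for every s ∈ M. -/

import Mathlib

open MeasureTheory

variable {Ω : Type*} [MeasurableSpace Ω]

/-- `M`: the measurable functions `Ω → [-∞, ∞]`. -/
def MSp (Ω : Type*) [MeasurableSpace Ω] : Type _ := {f : Ω → EReal // Measurable f}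

/-- The constant function `+∞` as an element of `M`. -/
noncomputable def MSp.mtop (Ω : Type*) [MeasurableSpace Ω] : MSp Ω := ⟨fun _ => ⊤, measurable_const⟩

/-- The constant function `-∞` as an element of `M`. -/
noncomputable def MSp.mbot (Ω : Type*) [MeasurableSpace Ω] : MSp Ω := ⟨fun _ => ⊥, measurable_const⟩

open Classical in
/-- The pointwise piecewise combination `1_A f + 1_{Aᶜ} g`. -/
noncomputable def pcf (A : Set Ω) (f g : Ω → EReal) : Ω → EReal :=
  fun ω => if ω ∈ A then f ω else g ω

/-- The piecewise combination `1_A m + 1_{Aᶜ} n` as an element of `M`. -/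
noncomputable def MSp.pc (A : Set Ω) (hA : MeasurableSet A) (m n : MSp Ω) : MSp Ω :=
  ⟨pcf A m.1 n.1, by classical unfold pcf; exact Measurable.ite hA m.2 n.2⟩

/-- `F : M → M` respects `P`-a.e. equality. -/
def RespectsAE (P : Measure Ω) (F : MSp Ω → MSp Ω) : Prop :=
  ∀ m n : MSp Ω, m.1 =ᵐ[P] n.1 → (F m).1 =ᵐ[P] (F n).1

/-- `F : M → M` is increasing with respect to the `P`-a.e. order. -/
def IncreasingAE (P : Measure Ω) (F : MSp Ω → MSp Ω) : Prop :=
  ∀ m n : MSp Ω, m.1 ≤ᵐ[P] n.1 → (F m).1 ≤ᵐ[P] (F n).1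

/-- `F : M → M` is local: `F(1_A m + 1_{Aᶜ} n) = 1_A F(m) + 1_{Aᶜ} F(n)` a.e. -/
def LocalAE (P : Measure Ω) (F : MSp Ω → MSp Ω) : Prop :=
  ∀ (A : Set Ω) (hA : MeasurableSet A) (m n : MSp Ω),
    (F (MSp.pc A hA m n)).1 =ᵐ[P] pcf A (F m).1 (F n).1

/-- `g` is an essential infimum of the set `S ⊆ M`. -/
def IsEssInfM (P : Measure Ω) (S : Set (MSp Ω)) (g : MSp Ω) : Prop :=
  (∀ f ∈ S, g.1 ≤ᵐ[P] f.1) ∧ ∀ h : MSp Ω, (∀ f ∈ S, h.1 ≤ᵐ[P] f.1) → h.1 ≤ᵐ[P] g.1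

/-- `g` is an essential supremum of the set `S ⊆ M`. -/
def IsEssSupM (P : Measure Ω) (S : Set (MSp Ω)) (g : MSp Ω) : Prop :=
  (∀ f ∈ S, f.1 ≤ᵐ[P] g.1) ∧ ∀ h : MSp Ω, (∀ f ∈ S, f.1 ≤ᵐ[P] h.1) → g.1 ≤ᵐ[P] h.1

/-- `Gl` is a conditional left-inverse of `F`: writing `A_s = {F(+∞) ≥ s}`, one has
`Gl(s) = +∞` a.e. on `A_sᶜ` and, on `A_s`, `Gl(s)` agrees a.e. with an essential infimum
of `{ m ∈ M : F(m) ≥ s a.e. on A_s }`. -/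
def IsCondLeftInv (P : Measure Ω) (F Gl : MSp Ω → MSp Ω) : Prop :=
  ∀ s : MSp Ω,
    (∀ᵐ ω ∂P, ω ∉ {ω' | s.1 ω' ≤ (F (MSp.mtop Ω)).1 ω'} → (Gl s).1 ω = ⊤) ∧
    ∃ g : MSp Ω,
      IsEssInfM P
        {m : MSp Ω | ∀ᵐ ω ∂P, ω ∈ {ω' | s.1 ω' ≤ (F (MSp.mtop Ω)).1 ω'} →
          s.1 ω ≤ (F m).1 ω} g ∧
      ∀ᵐ ω ∂P, ω ∈ {ω' | s.1 ω' ≤ (F (MSp.mtop Ω)).1 ω'} → (Gl s).1 ω = g.1 ω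

/-- `Gr` is a conditional right-inverse of `F`: writing `B_s = {F(-∞) ≤ s}`, one has
`Gr(s) = -∞` a.e. on `B_sᶜ` and, on `B_s`, `Gr(s)` agrees a.e. with an essential supremum
of `{ m ∈ M : F(m) ≤ s a.e. on B_s }`. -/
def IsCondRightInv (P : Measure Ω) (F Gr : MSp Ω → MSp Ω) : Prop :=
  ∀ s : MSp Ω,
    (∀ᵐ ω ∂P, ω ∉ {ω' | (F (MSp.mbot Ω)).1 ω' ≤ s.1 ω'} → (Gr s).1 ω = ⊥) ∧
    ∃ g : MSp Ω,
      IsEssSupM P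
        {m : MSp Ω | ∀ᵐ ω ∂P, ω ∈ {ω' | (F (MSp.mbot Ω)).1 ω' ≤ s.1 ω'} →
          (F m).1 ω ≤ s.1 ω} g ∧
      ∀ᵐ ω ∂P, ω ∈ {ω' | (F (MSp.mbot Ω)).1 ω' ≤ s.1 ω'} → (Gr s).1 ω = g.1 ω

/-- `Fm` is a left-continuous version of `F`: `Fm(m) = -∞` a.e. on `{m = -∞}` and, on
`{m > -∞}`, `Fm(m)` agrees a.e. with an essential supremum of
`{ F(n) : n < m a.e. on {m > -∞} }`. -/
def IsLeftContVersion (P : Measure Ω) (F Fm : MSp Ω → MSp Ω) : Prop :=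
  ∀ m : MSp Ω,
    (∀ᵐ ω ∂P, m.1 ω = ⊥ → (Fm m).1 ω = ⊥) ∧
    ∃ g : MSp Ω,
      IsEssSupM P
        (F '' {n : MSp Ω | ∀ᵐ ω ∂P, ω ∈ {ω' | ⊥ < m.1 ω'} → n.1 ω < m.1 ω}) g ∧
      ∀ᵐ ω ∂P, ω ∈ {ω' | ⊥ < m.1 ω'} → (Fm m).1 ω = g.1 ω

/-- `Fp` is a right-continuous version of `F`: `Fp(m) = +∞` a.e. on `{m = +∞}` and, on
`{m < +∞}`, `Fp(m)` agrees a.e. with an essential infimum of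
`{ F(n) : n > m a.e. on {m < +∞} }`. -/
def IsRightContVersion (P : Measure Ω) (F Fp : MSp Ω → MSp Ω) : Prop :=
  ∀ m : MSp Ω,
    (∀ᵐ ω ∂P, m.1 ω = ⊤ → (Fp m).1 ω = ⊤) ∧
    ∃ g : MSp Ω,
      IsEssInfM P
        (F '' {n : MSp Ω | ∀ᵐ ω ∂P, ω ∈ {ω' | m.1 ω' < ⊤} → m.1 ω < n.1 ω}) g ∧
      ∀ᵐ ω ∂P, ω ∈ {ω' | m.1 ω' < ⊤} → (Fp m).1 ω = g.1 ω

/-- `G` is a conditional inverse of `F`: it is local, increasing, respects a.e. equality,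
and for every left-continuous version `F⁻` and right-continuous version `F⁺` of `F` and
every `s ∈ M`: `F⁻(G(s)) ≤ s ≤ F⁺(G(s))` a.e. on `{F(-∞) < s < F(+∞)}`, `G(s) = -∞` a.e.
on `{s < F(-∞)}`, and `G(s) = +∞` a.e. on `{F(+∞) < s}`. -/
def IsCondInverse (P : Measure Ω) (F G : MSp Ω → MSp Ω) : Prop :=
  LocalAE P G ∧ IncreasingAE P G ∧ RespectsAE P G ∧
  ∀ (Fm Fp : MSp Ω → MSp Ω), IsLeftContVersion P F Fm → IsRightContVersion P F Fp →
    ∀ s : MSp Ω,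
      (∀ᵐ ω ∂P, (F (MSp.mbot Ω)).1 ω < s.1 ω → s.1 ω < (F (MSp.mtop Ω)).1 ω →
        (Fm (G s)).1 ω ≤ s.1 ω ∧ s.1 ω ≤ (Fp (G s)).1 ω) ∧
      (∀ᵐ ω ∂P, s.1 ω < (F (MSp.mbot Ω)).1 ω → (G s).1 ω = ⊥) ∧
      (∀ᵐ ω ∂P, (F (MSp.mtop Ω)).1 ω < s.1 ω → (G s).1 ω = ⊤)

section Helpers

variable {P : Measure Ω}

/-- constant rational as an element of `M` -/
noncomputable def ratCst (Ω : Type*) [MeasurableSpace Ω] (q : ℚ) : MSp Ω :=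
  ⟨fun _ => ((q : ℝ) : EReal), measurable_const⟩

lemma pc_of_mem {A : Set Ω} (hA : MeasurableSet A) (m n : MSp Ω) {ω : Ω} (h : ω ∈ A) :
    (MSp.pc A hA m n).1 ω = m.1 ω := by
  simp only [MSp.pc, pcf]
  exact if_pos h

lemma pc_of_not_mem {A : Set Ω} (hA : MeasurableSet A) (m n : MSp Ω) {ω : Ω} (h : ω ∉ A) :
    (MSp.pc A hA m n).1 ω = n.1 ω := by
  simp only [MSp.pc, pcf]
  exact if_neg h

lemma pcf_of_mem {A : Set Ω} (f g : Ω → EReal) {ω : Ω} (h : ω ∈ A) :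
    pcf A f g ω = f ω := by
  simp only [pcf]; exact if_pos h

lemma pcf_of_not_mem {A : Set Ω} (f g : Ω → EReal) {ω : Ω} (h : ω ∉ A) :
    pcf A f g ω = g ω := by
  simp only [pcf]; exact if_neg h

lemma ereal_le_of_forall_rat_btwn {a b c : EReal} (hab : a < b)
    (h : ∀ q : ℚ, a < ((q : ℝ) : EReal) → ((q : ℝ) : EReal) < b → ((q : ℝ) : EReal) ≤ c) :
    b ≤ c := by
  by_contra hcb
  push_neg at hcb
  obtain ⟨q, h1, h2⟩ := EReal.exists_rat_btwn_of_lt (max_lt hab hcb)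
  exact absurd (h q ((le_max_left a c).trans_lt h1) h2)
    (not_le.2 ((le_max_right a c).trans_lt h1))

lemma ereal_ge_of_forall_rat_btwn {a b c : EReal} (hab : b < a)
    (h : ∀ q : ℚ, b < ((q : ℝ) : EReal) → ((q : ℝ) : EReal) < a → c ≤ ((q : ℝ) : EReal)) :
    c ≤ b := by
  by_contra hbc
  push_neg at hbc
  obtain ⟨q, h1, h2⟩ := EReal.exists_rat_btwn_of_lt (lt_min hab hbc)
  exact absurd (h q h1 (h2.trans_le (min_le_left a c)))
    (not_le.2 (h2.trans_le (min_le_right a c)))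

lemma ereal_le_of_forall_rat_gt {w g : EReal}
    (h : ∀ q : ℚ, w < ((q : ℝ) : EReal) → g ≤ ((q : ℝ) : EReal)) : g ≤ w := by
  by_contra hwg
  push_neg at hwg
  obtain ⟨q, h1, h2⟩ := EReal.exists_rat_btwn_of_lt hwg
  exact absurd (h q h1) (not_le.2 h2)

lemma ereal_ge_of_forall_rat_lt {w g : EReal}
    (h : ∀ q : ℚ, ((q : ℝ) : EReal) < w → ((q : ℝ) : EReal) ≤ g) : w ≤ g := by
  by_contra hwg
  push_neg at hwg
  obtain ⟨q, h1, h2⟩ := EReal.exists_rat_btwn_of_lt hwg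
  exact absurd (h q h2) (not_le.2 h1)

/-- local + increasing maps are monotone on measurable sets. -/
theorem monoOnAE {F : MSp Ω → MSp Ω} (hFloc : LocalAE P F) (hFinc : IncreasingAE P F)
    {C : Set Ω} (hC : MeasurableSet C) {a b : MSp Ω}
    (hab : ∀ᵐ ω ∂P, ω ∈ C → a.1 ω ≤ b.1 ω) :
    ∀ᵐ ω ∂P, ω ∈ C → (F a).1 ω ≤ (F b).1 ω := by
  have hd : (MSp.pc C hC a b).1 ≤ᵐ[P] b.1 := by
    filter_upwards [hab] with ω h
    by_cases hω : ω ∈ C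
    · rw [pc_of_mem hC a b hω]; exact h hω
    · rw [pc_of_not_mem hC a b hω]
  filter_upwards [hFinc _ b hd, hFloc C hC a b] with ω h1 h2 hωC
  calc (F a).1 ω = pcf C (F a).1 (F b).1 ω := (pcf_of_mem _ _ hωC).symm
    _ = (F (MSp.pc C hC a b)).1 ω := h2.symm
    _ ≤ (F b).1 ω := h1

end Helpers

section Versions

variable {P : Measure Ω}

/-- `q` on `{m < q}`, `⊤` elsewhere: a canonical element strictly above `m` where `m < ⊤`. -/
noncomputable def npF (m : MSp Ω) (q : ℚ) : MSp Ω :=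
  MSp.pc {ω | m.1 ω < ((q : ℝ) : EReal)} (measurableSet_lt m.2 measurable_const)
    (ratCst Ω q) (MSp.mtop Ω)

/-- `q` on `{q < m}`, `⊥` elsewhere: a canonical element strictly below `m` where `⊥ < m`. -/
noncomputable def nmF (m : MSp Ω) (q : ℚ) : MSp Ω :=
  MSp.pc {ω | ((q : ℝ) : EReal) < m.1 ω} (measurableSet_lt measurable_const m.2)
    (ratCst Ω q) (MSp.mbot Ω)

lemma npF_val_of_mem {m : MSp Ω} {q : ℚ} {ω : Ω} (h : m.1 ω < ((q : ℝ) : EReal)) :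
    (npF m q).1 ω = ((q : ℝ) : EReal) :=
  pc_of_mem _ (ratCst Ω q) (MSp.mtop Ω) h

lemma npF_val_of_not_mem {m : MSp Ω} {q : ℚ} {ω : Ω} (h : ¬ m.1 ω < ((q : ℝ) : EReal)) :
    (npF m q).1 ω = ⊤ :=
  pc_of_not_mem _ (ratCst Ω q) (MSp.mtop Ω) h

lemma nmF_val_of_mem {m : MSp Ω} {q : ℚ} {ω : Ω} (h : ((q : ℝ) : EReal) < m.1 ω) :
    (nmF m q).1 ω = ((q : ℝ) : EReal) :=
  pc_of_mem _ (ratCst Ω q) (MSp.mbot Ω) h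

lemma nmF_val_of_not_mem {m : MSp Ω} {q : ℚ} {ω : Ω} (h : ¬ ((q : ℝ) : EReal) < m.1 ω) :
    (nmF m q).1 ω = ⊥ :=
  pc_of_not_mem _ (ratCst Ω q) (MSp.mbot Ω) h

theorem exists_rightContVersion (P : Measure Ω) (F : MSp Ω → MSp Ω)
    (hFloc : LocalAE P F) (hFinc : IncreasingAE P F) :
    ∃ Fp, IsRightContVersion P F Fp := by
  classical
  refine ⟨fun m => MSp.pc {ω | m.1 ω < ⊤} (measurableSet_lt m.2 measurable_const)
      ⟨fun ω => ⨅ q : ℚ, (F (npF m q)).1 ω, Measurable.iInf fun q => (F (npF m q)).2⟩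
      (MSp.mtop Ω), fun m => ?_⟩
  set T : Set Ω := {ω | m.1 ω < ⊤} with hTdef
  have hT : MeasurableSet T := measurableSet_lt m.2 measurable_const
  set gin : MSp Ω := ⟨fun ω => ⨅ q : ℚ, (F (npF m q)).1 ω,
    Measurable.iInf fun q => (F (npF m q)).2⟩ with hgin
  set g : MSp Ω := MSp.pc T hT gin (F (MSp.mbot Ω)) with hgdef
  refine ⟨?_, g, ⟨?_, ?_⟩, ?_⟩
  · -- = ⊤ on {m = ⊤}
    refine Filter.Eventually.of_forall fun ω h => ?_
    have : ω ∉ T := by simp [hTdef, h]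
    exact pc_of_not_mem hT _ _ this
  · -- lower bound of the family
    rintro f ⟨n, hn, rfl⟩
    have hq : ∀ q : ℚ, ∀ᵐ ω ∂P,
        ω ∈ {ω | m.1 ω < ((q : ℝ) : EReal) ∧ ((q : ℝ) : EReal) ≤ n.1 ω} →
          (F (npF m q)).1 ω ≤ (F n).1 ω := by
      intro q
      refine monoOnAE hFloc hFinc
        ((measurableSet_lt m.2 measurable_const).inter
          (measurableSet_le measurable_const n.2)) ?_
      refine Filter.Eventually.of_forall fun ω h => ?_
      rw [show (npF m q).1 ω = (ratCst Ω q).1 ω from pc_of_mem _ _ _ h.1]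
      exact h.2
    have hbot : (F (MSp.mbot Ω)).1 ≤ᵐ[P] (F n).1 :=
      hFinc _ n (Filter.Eventually.of_forall fun ω => bot_le)
    filter_upwards [MeasureTheory.ae_all_iff.2 hq, hn, hbot] with ω hq hn hbot
    by_cases hωT : ω ∈ T
    · obtain ⟨q, h1, h2⟩ := EReal.exists_rat_btwn_of_lt (hn hωT)
      rw [pc_of_mem hT _ _ hωT]
      exact (iInf_le (fun q => (F (npF m q)).1 ω) q).trans (hq q ⟨h1, h2.le⟩)
    · rw [pc_of_not_mem hT _ _ hωT]
      exact hbot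
  · -- maximality
    intro h hh
    have hqmem : ∀ q : ℚ, npF m q ∈
        {n : MSp Ω | ∀ᵐ ω ∂P, ω ∈ {ω' | m.1 ω' < ⊤} → m.1 ω < n.1 ω} := by
      intro q
      simp only [Set.mem_setOf_eq]
      refine Filter.Eventually.of_forall fun ω hω => ?_
      unfold npF
      by_cases hq : ω ∈ {ω | m.1 ω < ((q : ℝ) : EReal)}
      · rw [pc_of_mem _ _ _ hq]; exact hq
      · rw [pc_of_not_mem _ _ _ hq]; exact hω
    have hq := fun q : ℚ => hh (F (npF m q)) (Set.mem_image_of_mem F (hqmem q))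
    have hn0mem : MSp.pc T hT (MSp.mtop Ω) (MSp.mbot Ω) ∈
        {n : MSp Ω | ∀ᵐ ω ∂P, ω ∈ {ω' | m.1 ω' < ⊤} → m.1 ω < n.1 ω} := by
      simp only [Set.mem_setOf_eq]
      refine Filter.Eventually.of_forall fun ω hω => ?_
      rw [pc_of_mem hT _ _ hω]; exact hω
    have h0 := hh _ (Set.mem_image_of_mem F hn0mem)
    have hloc := hFloc T hT (MSp.mtop Ω) (MSp.mbot Ω)
    filter_upwards [MeasureTheory.ae_all_iff.2 hq, h0, hloc] with ω hq h0 hloc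
    by_cases hωT : ω ∈ T
    · rw [pc_of_mem hT _ _ hωT]
      exact le_iInf fun q => hq q
    · rw [pc_of_not_mem hT _ _ hωT]
      rw [hloc, pcf_of_not_mem _ _ hωT] at h0
      exact h0
  · -- agreement on T
    refine Filter.Eventually.of_forall fun ω hω => ?_
    exact (pc_of_mem hT _ _ hω).trans (pc_of_mem hT _ _ hω).symm

theorem exists_leftContVersion (P : Measure Ω) (F : MSp Ω → MSp Ω)
    (hFloc : LocalAE P F) (hFinc : IncreasingAE P F) :
    ∃ Fm, IsLeftContVersion P F Fm := by
  classical
  refine ⟨fun m => MSp.pc {ω | ⊥ < m.1 ω} (measurableSet_lt measurable_const m.2)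
      ⟨fun ω => ⨆ q : ℚ, (F (nmF m q)).1 ω, Measurable.iSup fun q => (F (nmF m q)).2⟩
      (MSp.mbot Ω), fun m => ?_⟩
  set T : Set Ω := {ω | ⊥ < m.1 ω} with hTdef
  have hT : MeasurableSet T := measurableSet_lt measurable_const m.2
  set gin : MSp Ω := ⟨fun ω => ⨆ q : ℚ, (F (nmF m q)).1 ω,
    Measurable.iSup fun q => (F (nmF m q)).2⟩ with hgin
  set g : MSp Ω := MSp.pc T hT gin (F (MSp.mtop Ω)) with hgdef
  refine ⟨?_, g, ⟨?_, ?_⟩, ?_⟩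
  · refine Filter.Eventually.of_forall fun ω h => ?_
    have : ω ∉ T := by simp [hTdef, h]
    exact pc_of_not_mem hT _ _ this
  · rintro f ⟨n, hn, rfl⟩
    have hq : ∀ q : ℚ, ∀ᵐ ω ∂P,
        ω ∈ {ω | n.1 ω ≤ ((q : ℝ) : EReal) ∧ ((q : ℝ) : EReal) < m.1 ω} →
          (F n).1 ω ≤ (F (nmF m q)).1 ω := by
      intro q
      refine monoOnAE hFloc hFinc
        ((measurableSet_le n.2 measurable_const).inter
          (measurableSet_lt measurable_const m.2)) ?_
      refine Filter.Eventually.of_forall fun ω h => ?_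
      rw [show (nmF m q).1 ω = (ratCst Ω q).1 ω from pc_of_mem _ _ _ h.2]
      exact h.1
    have htop : (F n).1 ≤ᵐ[P] (F (MSp.mtop Ω)).1 :=
      hFinc n _ (Filter.Eventually.of_forall fun ω => le_top)
    filter_upwards [MeasureTheory.ae_all_iff.2 hq, hn, htop] with ω hq hn htop
    by_cases hωT : ω ∈ T
    · obtain ⟨q, h1, h2⟩ := EReal.exists_rat_btwn_of_lt (hn hωT)
      rw [pc_of_mem hT _ _ hωT]
      exact (hq q ⟨h1.le, h2⟩).trans (le_iSup (fun q => (F (nmF m q)).1 ω) q)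
    · rw [pc_of_not_mem hT _ _ hωT]
      exact htop
  · intro h hh
    have hqmem : ∀ q : ℚ, nmF m q ∈
        {n : MSp Ω | ∀ᵐ ω ∂P, ω ∈ {ω' | ⊥ < m.1 ω'} → n.1 ω < m.1 ω} := by
      intro q
      simp only [Set.mem_setOf_eq]
      refine Filter.Eventually.of_forall fun ω hω => ?_
      unfold nmF
      by_cases hq : ω ∈ {ω | ((q : ℝ) : EReal) < m.1 ω}
      · rw [pc_of_mem _ _ _ hq]; exact hq
      · rw [pc_of_not_mem _ _ _ hq]; exact hω
    have hq := fun q : ℚ => hh (F (nmF m q)) (Set.mem_image_of_mem F (hqmem q))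
    have hn0mem : MSp.pc T hT (MSp.mbot Ω) (MSp.mtop Ω) ∈
        {n : MSp Ω | ∀ᵐ ω ∂P, ω ∈ {ω' | ⊥ < m.1 ω'} → n.1 ω < m.1 ω} := by
      simp only [Set.mem_setOf_eq]
      refine Filter.Eventually.of_forall fun ω hω => ?_
      rw [pc_of_mem hT _ _ hω]; exact hω
    have h0 := hh _ (Set.mem_image_of_mem F hn0mem)
    have hloc := hFloc T hT (MSp.mbot Ω) (MSp.mtop Ω)
    filter_upwards [MeasureTheory.ae_all_iff.2 hq, h0, hloc] with ω hq h0 hloc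
    by_cases hωT : ω ∈ T
    · rw [pc_of_mem hT _ _ hωT]
      exact iSup_le fun q => hq q
    · rw [pc_of_not_mem hT _ _ hωT]
      rw [hloc, pcf_of_not_mem _ _ hωT] at h0
      exact h0
  · refine Filter.Eventually.of_forall fun ω hω => ?_
    exact (pc_of_mem hT _ _ hω).trans (pc_of_mem hT _ _ hω).symm

end Versions

section Key

variable {P : Measure Ω} {F G : MSp Ω → MSp Ω}

/-- `q` on `{F(⊥) < q < s}`, `⊥` elsewhere. -/
noncomputable def tqlF (F : MSp Ω → MSp Ω) (s : MSp Ω) (q : ℚ) : MSp Ω :=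
  MSp.pc ({ω | (F (MSp.mbot Ω)).1 ω < ((q : ℝ) : EReal)} ∩ {ω | ((q : ℝ) : EReal) < s.1 ω})
    ((measurableSet_lt (F (MSp.mbot Ω)).2 measurable_const).inter
      (measurableSet_lt measurable_const s.2)) (ratCst Ω q) (MSp.mbot Ω)

/-- `q` on `{s < q < F(⊤)}`, `⊤` elsewhere. -/
noncomputable def tqrF (F : MSp Ω → MSp Ω) (s : MSp Ω) (q : ℚ) : MSp Ω :=
  MSp.pc ({ω | s.1 ω < ((q : ℝ) : EReal)} ∩ {ω | ((q : ℝ) : EReal) < (F (MSp.mtop Ω)).1 ω})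
    ((measurableSet_lt s.2 measurable_const).inter
      (measurableSet_lt measurable_const (F (MSp.mtop Ω)).2)) (ratCst Ω q) (MSp.mtop Ω)

theorem keyP {Fp : MSp Ω → MSp Ω} (hFp : IsRightContVersion P F Fp)
    (hsand : ∀ u : MSp Ω, ∀ᵐ ω ∂P, (F (MSp.mbot Ω)).1 ω < u.1 ω →
      u.1 ω < (F (MSp.mtop Ω)).1 ω → u.1 ω ≤ (Fp (G u)).1 ω)
    (t n : MSp Ω)
    (hn : ∀ᵐ ω ∂P, ω ∈ {ω' | (G t).1 ω' < ⊤} → (G t).1 ω < n.1 ω) :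
    ∀ᵐ ω ∂P, (F (MSp.mbot Ω)).1 ω < t.1 ω → t.1 ω < (F (MSp.mtop Ω)).1 ω →
      (G t).1 ω < ⊤ → t.1 ω ≤ (F n).1 ω := by
  obtain ⟨-, g, hg, hagree⟩ := hFp (G t)
  have h1 : g.1 ≤ᵐ[P] (F n).1 := hg.1 (F n) (Set.mem_image_of_mem F hn)
  filter_upwards [h1, hagree, hsand t] with ω h1 hagree hsand hb ht hlt
  have h2 := hsand hb ht
  rw [hagree hlt] at h2
  exact h2.trans h1

theorem keyM {Fm : MSp Ω → MSp Ω} (hFm : IsLeftContVersion P F Fm)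
    (hsand : ∀ u : MSp Ω, ∀ᵐ ω ∂P, (F (MSp.mbot Ω)).1 ω < u.1 ω →
      u.1 ω < (F (MSp.mtop Ω)).1 ω → (Fm (G u)).1 ω ≤ u.1 ω)
    (t n : MSp Ω)
    (hn : ∀ᵐ ω ∂P, ω ∈ {ω' | ⊥ < (G t).1 ω'} → n.1 ω < (G t).1 ω) :
    ∀ᵐ ω ∂P, (F (MSp.mbot Ω)).1 ω < t.1 ω → t.1 ω < (F (MSp.mtop Ω)).1 ω →
      ⊥ < (G t).1 ω → (F n).1 ω ≤ t.1 ω := by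
  obtain ⟨-, g, hg, hagree⟩ := hFm (G t)
  have h1 : (F n).1 ≤ᵐ[P] g.1 := hg.1 (F n) (Set.mem_image_of_mem F hn)
  filter_upwards [h1, hagree, hsand t] with ω h1 hagree hsand hb ht hlt
  have h2 := hsand hb ht
  rw [hagree hlt] at h2
  exact h1.trans h2

theorem lemA (hFloc : LocalAE P F) (hFinc : IncreasingAE P F)
    (hkey : ∀ t n : MSp Ω, (∀ᵐ ω ∂P, ω ∈ {ω' | (G t).1 ω' < ⊤} → (G t).1 ω < n.1 ω) →
      ∀ᵐ ω ∂P, (F (MSp.mbot Ω)).1 ω < t.1 ω → t.1 ω < (F (MSp.mtop Ω)).1 ω →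
        (G t).1 ω < ⊤ → t.1 ω ≤ (F n).1 ω)
    (s w : MSp Ω)
    (hw : ∀ q : ℚ, (G (tqlF F s q)).1 ≤ᵐ[P] w.1)
    {g : MSp Ω}
    (hgInf : IsEssInfM P {m : MSp Ω | ∀ᵐ ω ∂P,
      ω ∈ {ω' | s.1 ω' ≤ (F (MSp.mtop Ω)).1 ω'} → s.1 ω ≤ (F m).1 ω} g) :
    g.1 ≤ᵐ[P] w.1 := by
  have step1 : ∀ qn : ℚ, ∀ᵐ ω ∂P,
      ω ∈ {ω' | s.1 ω' ≤ (F (MSp.mtop Ω)).1 ω'} → s.1 ω ≤ (F (npF w qn)).1 ω := by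
    intro qn
    have hmem : ∀ q' : ℚ, ∀ᵐ ω ∂P,
        ω ∈ {ω' | (G (tqlF F s q')).1 ω' < ⊤} → (G (tqlF F s q')).1 ω < (npF w qn).1 ω := by
      intro q'
      filter_upwards [hw q'] with ω hG hlt
      unfold npF
      by_cases hwq : ω ∈ {ω | w.1 ω < ((qn : ℝ) : EReal)}
      · rw [pc_of_mem _ _ _ hwq]; exact lt_of_le_of_lt hG hwq
      · rw [pc_of_not_mem _ _ _ hwq]; exact hlt
    have hq' := fun q' : ℚ => hkey (tqlF F s q') (npF w qn) (hmem q')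
    have hloc := hFloc {ω | w.1 ω < ((qn : ℝ) : EReal)} (measurableSet_lt w.2 measurable_const)
      (ratCst Ω qn) (MSp.mtop Ω)
    have hFb : (F (MSp.mbot Ω)).1 ≤ᵐ[P] (F (npF w qn)).1 :=
      hFinc _ _ (Filter.Eventually.of_forall fun ω => bot_le)
    filter_upwards [MeasureTheory.ae_all_iff.2 hq', MeasureTheory.ae_all_iff.2 hw,
      hloc, hFb] with ω hq' hw' hloc hFb hA
    by_cases hwq : ω ∈ {ω | w.1 ω < ((qn : ℝ) : EReal)}
    · by_cases hsb : s.1 ω ≤ (F (MSp.mbot Ω)).1 ω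
      · exact hsb.trans hFb
      · push_neg at hsb
        refine ereal_le_of_forall_rat_btwn hsb fun q' h1 h2 => ?_
        have htval : (tqlF F s q').1 ω = ((q' : ℝ) : EReal) :=
          pc_of_mem _ (ratCst Ω q') (MSp.mbot Ω) (Set.mem_inter h1 h2)
        have hGlt : (G (tqlF F s q')).1 ω < ⊤ :=
          lt_of_le_of_lt (hw' q') (hwq.trans (EReal.coe_lt_top _))
        have h3 := hq' q'
        rw [htval] at h3
        exact h3 h1 (h2.trans_le hA) hGlt
    · have : (F (npF w qn)).1 ω = (F (MSp.mtop Ω)).1 ω := by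
        rw [show (F (npF w qn)).1 ω
            = pcf {ω | w.1 ω < ((qn : ℝ) : EReal)} (F (ratCst Ω qn)).1 (F (MSp.mtop Ω)).1 ω
          from hloc, pcf_of_not_mem _ _ hwq]
      rw [this]; exact hA
  have step2 := fun qn : ℚ => hgInf.1 (npF w qn) (step1 qn)
  filter_upwards [MeasureTheory.ae_all_iff.2 step2] with ω h
  refine ereal_le_of_forall_rat_gt fun q hq => ?_
  exact (h q).trans (npF_val_of_mem hq).le

theorem lemA' (hFloc : LocalAE P F) (hFinc : IncreasingAE P F)
    (hkey : ∀ t n : MSp Ω, (∀ᵐ ω ∂P, ω ∈ {ω' | ⊥ < (G t).1 ω'} → n.1 ω < (G t).1 ω) →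
      ∀ᵐ ω ∂P, (F (MSp.mbot Ω)).1 ω < t.1 ω → t.1 ω < (F (MSp.mtop Ω)).1 ω →
        ⊥ < (G t).1 ω → (F n).1 ω ≤ t.1 ω)
    (s w : MSp Ω)
    (hw : ∀ q : ℚ, w.1 ≤ᵐ[P] (G (tqrF F s q)).1)
    {g : MSp Ω}
    (hgSup : IsEssSupM P {m : MSp Ω | ∀ᵐ ω ∂P,
      ω ∈ {ω' | (F (MSp.mbot Ω)).1 ω' ≤ s.1 ω'} → (F m).1 ω ≤ s.1 ω} g) :
    w.1 ≤ᵐ[P] g.1 := by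
  have step1 : ∀ qn : ℚ, ∀ᵐ ω ∂P,
      ω ∈ {ω' | (F (MSp.mbot Ω)).1 ω' ≤ s.1 ω'} → (F (nmF w qn)).1 ω ≤ s.1 ω := by
    intro qn
    have hmem : ∀ q' : ℚ, ∀ᵐ ω ∂P,
        ω ∈ {ω' | ⊥ < (G (tqrF F s q')).1 ω'} → (nmF w qn).1 ω < (G (tqrF F s q')).1 ω := by
      intro q'
      filter_upwards [hw q'] with ω hG hlt
      unfold nmF
      by_cases hwq : ω ∈ {ω | ((qn : ℝ) : EReal) < w.1 ω}
      · rw [pc_of_mem _ _ _ hwq]; exact lt_of_lt_of_le hwq hG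
      · rw [pc_of_not_mem _ _ _ hwq]; exact hlt
    have hq' := fun q' : ℚ => hkey (tqrF F s q') (nmF w qn) (hmem q')
    have hloc := hFloc {ω | ((qn : ℝ) : EReal) < w.1 ω} (measurableSet_lt measurable_const w.2)
      (ratCst Ω qn) (MSp.mbot Ω)
    have hFt : (F (nmF w qn)).1 ≤ᵐ[P] (F (MSp.mtop Ω)).1 :=
      hFinc _ _ (Filter.Eventually.of_forall fun ω => le_top)
    filter_upwards [MeasureTheory.ae_all_iff.2 hq', MeasureTheory.ae_all_iff.2 hw,
      hloc, hFt] with ω hq' hw' hloc hFt hB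
    by_cases hwq : ω ∈ {ω | ((qn : ℝ) : EReal) < w.1 ω}
    · by_cases hst : (F (MSp.mtop Ω)).1 ω ≤ s.1 ω
      · exact hFt.trans hst
      · push_neg at hst
        refine ereal_ge_of_forall_rat_btwn hst fun q' h1 h2 => ?_
        have htval : (tqrF F s q').1 ω = ((q' : ℝ) : EReal) :=
          pc_of_mem _ (ratCst Ω q') (MSp.mtop Ω) (Set.mem_inter h1 h2)
        have hGlt : ⊥ < (G (tqrF F s q')).1 ω :=
          lt_of_lt_of_le ((EReal.bot_lt_coe _).trans hwq) (hw' q')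
        have h3 := hq' q'
        rw [htval] at h3
        exact h3 (lt_of_le_of_lt hB h1) h2 hGlt
    · have : (F (nmF w qn)).1 ω = (F (MSp.mbot Ω)).1 ω := by
        rw [show (F (nmF w qn)).1 ω
            = pcf {ω | ((qn : ℝ) : EReal) < w.1 ω} (F (ratCst Ω qn)).1 (F (MSp.mbot Ω)).1 ω
          from hloc, pcf_of_not_mem _ _ hwq]
      rw [this]; exact hB
  have step2 := fun qn : ℚ => hgSup.1 (nmF w qn) (step1 qn)
  filter_upwards [MeasureTheory.ae_all_iff.2 step2] with ω h
  refine ereal_ge_of_forall_rat_lt fun q hq => ?_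
  exact le_trans (nmF_val_of_mem hq).ge (h q)

end Key

section Key2

variable {P : Measure Ω} {F G : MSp Ω → MSp Ω}

theorem lemB (hFloc : LocalAE P F) (hFinc : IncreasingAE P F)
    (hkey : ∀ t n : MSp Ω, (∀ᵐ ω ∂P, ω ∈ {ω' | ⊥ < (G t).1 ω'} → n.1 ω < (G t).1 ω) →
      ∀ᵐ ω ∂P, (F (MSp.mbot Ω)).1 ω < t.1 ω → t.1 ω < (F (MSp.mtop Ω)).1 ω →
        ⊥ < (G t).1 ω → (F n).1 ω ≤ t.1 ω)
    (hGinc : IncreasingAE P G)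
    (s t m : MSp Ω)
    (hGbott : ∀ᵐ ω ∂P, t.1 ω < (F (MSp.mbot Ω)).1 ω → (G t).1 ω = ⊥)
    (ht : ∀ᵐ ω ∂P, ⊥ < s.1 ω → t.1 ω < s.1 ω)
    (hm : ∀ᵐ ω ∂P, ω ∈ {ω' | s.1 ω' ≤ (F (MSp.mtop Ω)).1 ω'} → s.1 ω ≤ (F m).1 ω) :
    ∀ᵐ ω ∂P, ω ∈ {ω' | s.1 ω' ≤ (F (MSp.mtop Ω)).1 ω'} → ⊥ < s.1 ω →
      (G t).1 ω ≤ m.1 ω := by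
  classical
  have main : ∀ q : ℚ, ∀ᵐ ω ∂P,
      (t.1 ω < ((q : ℝ) : EReal) ∧ (F (MSp.mbot Ω)).1 ω < ((q : ℝ) : EReal) ∧
        ((q : ℝ) : EReal) < s.1 ω) →
      s.1 ω ≤ (F (MSp.mtop Ω)).1 ω → (G t).1 ω ≤ m.1 ω := by
    intro q
    set E : Set Ω := {ω | t.1 ω < ((q : ℝ) : EReal)} ∩
      ({ω | (F (MSp.mbot Ω)).1 ω < ((q : ℝ) : EReal)} ∩
        {ω | ((q : ℝ) : EReal) < s.1 ω}) with hEdef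
    have hE : MeasurableSet E := (measurableSet_lt t.2 measurable_const).inter
      ((measurableSet_lt (F (MSp.mbot Ω)).2 measurable_const).inter
        (measurableSet_lt measurable_const s.2))
    set t'' : MSp Ω := MSp.pc E hE (ratCst Ω q) t with ht''def
    have htle : t.1 ≤ᵐ[P] t''.1 := by
      refine Filter.Eventually.of_forall fun ω => ?_
      by_cases hω : ω ∈ E
      · rw [pc_of_mem hE _ _ hω]; exact hω.1.le
      · rw [pc_of_not_mem hE _ _ hω]
    have hGt := hGinc t t'' htle
    set V : Set Ω := E ∩ ({ω | s.1 ω ≤ (F (MSp.mtop Ω)).1 ω} ∩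
      {ω | m.1 ω < (G t'').1 ω}) with hVdef
    have hV : MeasurableSet V := hE.inter
      ((measurableSet_le s.2 (F (MSp.mtop Ω)).2).inter (measurableSet_lt m.2 (G t'').2))
    have hm'mem : ∀ᵐ ω ∂P, ω ∈ {ω' | ⊥ < (G t'').1 ω'} →
        (MSp.pc V hV m (MSp.mbot Ω)).1 ω < (G t'').1 ω := by
      refine Filter.Eventually.of_forall fun ω hω => ?_
      by_cases hωV : ω ∈ V
      · rw [pc_of_mem hV _ _ hωV]; exact hωV.2.2
      · rw [pc_of_not_mem hV _ _ hωV]; exact hω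
    have hk := hkey t'' (MSp.pc V hV m (MSp.mbot Ω)) hm'mem
    have hloc := hFloc V hV m (MSp.mbot Ω)
    have hcontra : ∀ᵐ ω ∂P, ω ∉ V := by
      filter_upwards [hk, hloc, hm] with ω hk hloc hm hωV
      have hωE : ω ∈ E := hωV.1
      have hωA := hωV.2.1
      have hωlt := hωV.2.2
      have ht''v : t''.1 ω = ((q : ℝ) : EReal) := pc_of_mem hE _ _ hωE
      have h1 : (F (MSp.mbot Ω)).1 ω < t''.1 ω := by rw [ht''v]; exact hωE.2.1
      have h2 : t''.1 ω < (F (MSp.mtop Ω)).1 ω := by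
        rw [ht''v]; exact hωE.2.2.trans_le hωA
      have h3 : ⊥ < (G t'').1 ω := bot_le.trans_lt hωlt
      have h4 := hk h1 h2 h3
      have h5 : (F m).1 ω ≤ ((q : ℝ) : EReal) := by
        calc (F m).1 ω = pcf V (F m).1 (F (MSp.mbot Ω)).1 ω := (pcf_of_mem _ _ hωV).symm
          _ = (F (MSp.pc V hV m (MSp.mbot Ω))).1 ω := hloc.symm
          _ ≤ t''.1 ω := h4
          _ = ((q : ℝ) : EReal) := ht''v
      exact absurd (hm hωA) (not_le.2 (h5.trans_lt hωE.2.2))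
    filter_upwards [hcontra, hGt] with ω hωV hGt hωE hωA
    have hnot : ¬ m.1 ω < (G t'').1 ω := fun hc =>
      hωV ⟨⟨hωE.1, hωE.2.1, hωE.2.2⟩, hωA, hc⟩
    exact hGt.trans (not_lt.1 hnot)
  filter_upwards [MeasureTheory.ae_all_iff.2 main, ht, hGbott] with ω hmain ht hGbott hA hs
  have htlt := ht hs
  by_cases hsb : s.1 ω ≤ (F (MSp.mbot Ω)).1 ω
  · rw [hGbott (htlt.trans_le hsb)]; exact bot_le
  · push_neg at hsb
    obtain ⟨q, h1, h2⟩ := EReal.exists_rat_btwn_of_lt (max_lt htlt hsb)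
    exact hmain q ⟨(le_max_left _ _).trans_lt h1, (le_max_right _ _).trans_lt h1, h2⟩ hA

theorem lemB' (hFloc : LocalAE P F) (hFinc : IncreasingAE P F)
    (hkey : ∀ t n : MSp Ω, (∀ᵐ ω ∂P, ω ∈ {ω' | (G t).1 ω' < ⊤} → (G t).1 ω < n.1 ω) →
      ∀ᵐ ω ∂P, (F (MSp.mbot Ω)).1 ω < t.1 ω → t.1 ω < (F (MSp.mtop Ω)).1 ω →
        (G t).1 ω < ⊤ → t.1 ω ≤ (F n).1 ω)
    (hGinc : IncreasingAE P G)
    (s t m : MSp Ω)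
    (hGtopt : ∀ᵐ ω ∂P, (F (MSp.mtop Ω)).1 ω < t.1 ω → (G t).1 ω = ⊤)
    (ht : ∀ᵐ ω ∂P, s.1 ω < ⊤ → s.1 ω < t.1 ω)
    (hm : ∀ᵐ ω ∂P, ω ∈ {ω' | (F (MSp.mbot Ω)).1 ω' ≤ s.1 ω'} → (F m).1 ω ≤ s.1 ω) :
    ∀ᵐ ω ∂P, ω ∈ {ω' | (F (MSp.mbot Ω)).1 ω' ≤ s.1 ω'} → s.1 ω < ⊤ →
      m.1 ω ≤ (G t).1 ω := by
  classical
  have main : ∀ q : ℚ, ∀ᵐ ω ∂P,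
      (((q : ℝ) : EReal) < t.1 ω ∧ ((q : ℝ) : EReal) < (F (MSp.mtop Ω)).1 ω ∧
        s.1 ω < ((q : ℝ) : EReal)) →
      (F (MSp.mbot Ω)).1 ω ≤ s.1 ω → m.1 ω ≤ (G t).1 ω := by
    intro q
    set E : Set Ω := {ω | ((q : ℝ) : EReal) < t.1 ω} ∩
      ({ω | ((q : ℝ) : EReal) < (F (MSp.mtop Ω)).1 ω} ∩
        {ω | s.1 ω < ((q : ℝ) : EReal)}) with hEdef
    have hE : MeasurableSet E := (measurableSet_lt measurable_const t.2).inter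
      ((measurableSet_lt measurable_const (F (MSp.mtop Ω)).2).inter
        (measurableSet_lt s.2 measurable_const))
    set t'' : MSp Ω := MSp.pc E hE (ratCst Ω q) t with ht''def
    have htle : t''.1 ≤ᵐ[P] t.1 := by
      refine Filter.Eventually.of_forall fun ω => ?_
      by_cases hω : ω ∈ E
      · rw [pc_of_mem hE _ _ hω]; exact hω.1.le
      · rw [pc_of_not_mem hE _ _ hω]
    have hGt := hGinc t'' t htle
    set V : Set Ω := E ∩ ({ω | (F (MSp.mbot Ω)).1 ω ≤ s.1 ω} ∩
      {ω | (G t'').1 ω < m.1 ω}) with hVdef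
    have hV : MeasurableSet V := hE.inter
      ((measurableSet_le (F (MSp.mbot Ω)).2 s.2).inter (measurableSet_lt (G t'').2 m.2))
    have hm'mem : ∀ᵐ ω ∂P, ω ∈ {ω' | (G t'').1 ω' < ⊤} →
        (G t'').1 ω < (MSp.pc V hV m (MSp.mtop Ω)).1 ω := by
      refine Filter.Eventually.of_forall fun ω hω => ?_
      by_cases hωV : ω ∈ V
      · rw [pc_of_mem hV _ _ hωV]; exact hωV.2.2
      · rw [pc_of_not_mem hV _ _ hωV]; exact hω
    have hk := hkey t'' (MSp.pc V hV m (MSp.mtop Ω)) hm'mem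
    have hloc := hFloc V hV m (MSp.mtop Ω)
    have hcontra : ∀ᵐ ω ∂P, ω ∉ V := by
      filter_upwards [hk, hloc, hm] with ω hk hloc hm hωV
      have hωE : ω ∈ E := hωV.1
      have hωB := hωV.2.1
      have hωlt := hωV.2.2
      have ht''v : t''.1 ω = ((q : ℝ) : EReal) := pc_of_mem hE _ _ hωE
      have h1 : (F (MSp.mbot Ω)).1 ω < t''.1 ω := by
        rw [ht''v]; exact hωB.trans_lt hωE.2.2
      have h2 : t''.1 ω < (F (MSp.mtop Ω)).1 ω := by rw [ht''v]; exact hωE.2.1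
      have h3 : (G t'').1 ω < ⊤ := hωlt.trans_le le_top
      have h4 := hk h1 h2 h3
      have h5 : ((q : ℝ) : EReal) ≤ (F m).1 ω := by
        calc ((q : ℝ) : EReal) = t''.1 ω := ht''v.symm
          _ ≤ (F (MSp.pc V hV m (MSp.mtop Ω))).1 ω := h4
          _ = pcf V (F m).1 (F (MSp.mtop Ω)).1 ω := hloc
          _ = (F m).1 ω := pcf_of_mem _ _ hωV
      exact absurd (hm hωB) (not_le.2 (hωE.2.2.trans_le h5))
    filter_upwards [hcontra, hGt] with ω hωV hGt hωE hωB
    have hnot : ¬ (G t'').1 ω < m.1 ω := fun hc =>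
      hωV ⟨⟨hωE.1, hωE.2.1, hωE.2.2⟩, hωB, hc⟩
    exact (not_lt.1 hnot).trans hGt
  filter_upwards [MeasureTheory.ae_all_iff.2 main, ht, hGtopt] with ω hmain ht hGtopt hB hs
  have htlt := ht hs
  by_cases hts : (F (MSp.mtop Ω)).1 ω ≤ s.1 ω
  · rw [hGtopt (hts.trans_lt htlt)]; exact le_top
  · push_neg at hts
    obtain ⟨q, h1, h2⟩ := EReal.exists_rat_btwn_of_lt (lt_min htlt hts)
    exact hmain q ⟨h2.trans_le (min_le_left _ _), h2.trans_le (min_le_right _ _), h1⟩ hB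

theorem lemC (hFloc : LocalAE P F) (s : MSp Ω) {g : MSp Ω}
    (hgInf : IsEssInfM P {m : MSp Ω | ∀ᵐ ω ∂P,
      ω ∈ {ω' | s.1 ω' ≤ (F (MSp.mtop Ω)).1 ω'} → s.1 ω ≤ (F m).1 ω} g) :
    ∀ᵐ ω ∂P, s.1 ω ≤ (F (MSp.mbot Ω)).1 ω → g.1 ω = ⊥ := by
  classical
  set B : Set Ω := {ω | s.1 ω ≤ (F (MSp.mbot Ω)).1 ω} with hBdef
  have hB : MeasurableSet B := measurableSet_le s.2 (F (MSp.mbot Ω)).2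
  have hmem : (MSp.pc B hB (MSp.mbot Ω) (MSp.mtop Ω)) ∈ {m : MSp Ω | ∀ᵐ ω ∂P,
      ω ∈ {ω' | s.1 ω' ≤ (F (MSp.mtop Ω)).1 ω'} → s.1 ω ≤ (F m).1 ω} := by
    simp only [Set.mem_setOf_eq]
    filter_upwards [hFloc B hB (MSp.mbot Ω) (MSp.mtop Ω)] with ω hloc hA
    rw [hloc]
    by_cases hω : ω ∈ B
    · rw [pcf_of_mem _ _ hω]; exact hω
    · rw [pcf_of_not_mem _ _ hω]; exact hA
  have hle := hgInf.1 _ hmem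
  filter_upwards [hle] with ω hle hB'
  rw [pc_of_mem hB _ _ hB'] at hle
  exact le_bot_iff.1 hle

theorem lemC' (hFloc : LocalAE P F) (s : MSp Ω) {g : MSp Ω}
    (hgSup : IsEssSupM P {m : MSp Ω | ∀ᵐ ω ∂P,
      ω ∈ {ω' | (F (MSp.mbot Ω)).1 ω' ≤ s.1 ω'} → (F m).1 ω ≤ s.1 ω} g) :
    ∀ᵐ ω ∂P, (F (MSp.mtop Ω)).1 ω ≤ s.1 ω → g.1 ω = ⊤ := by
  classical
  set B : Set Ω := {ω | (F (MSp.mtop Ω)).1 ω ≤ s.1 ω} with hBdef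
  have hB : MeasurableSet B := measurableSet_le (F (MSp.mtop Ω)).2 s.2
  have hmem : (MSp.pc B hB (MSp.mtop Ω) (MSp.mbot Ω)) ∈ {m : MSp Ω | ∀ᵐ ω ∂P,
      ω ∈ {ω' | (F (MSp.mbot Ω)).1 ω' ≤ s.1 ω'} → (F m).1 ω ≤ s.1 ω} := by
    simp only [Set.mem_setOf_eq]
    filter_upwards [hFloc B hB (MSp.mtop Ω) (MSp.mbot Ω)] with ω hloc hBs
    rw [hloc]
    by_cases hω : ω ∈ B
    · rw [pcf_of_mem _ _ hω]; exact hω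
    · rw [pcf_of_not_mem _ _ hω]; exact hBs
  have hle := hgSup.1 _ hmem
  filter_upwards [hle] with ω hle hB'
  rw [pc_of_mem hB _ _ hB'] at hle
  exact top_le_iff.1 hle

end Key2

section Extra

variable {P : Measure Ω} {F : MSp Ω → MSp Ω}

lemma tqlF_cases (F : MSp Ω → MSp Ω) (s : MSp Ω) (q : ℚ) (ω : Ω) :
    ((tqlF F s q).1 ω = ((q : ℝ) : EReal) ∧ (F (MSp.mbot Ω)).1 ω < ((q : ℝ) : EReal) ∧
      ((q : ℝ) : EReal) < s.1 ω) ∨ (tqlF F s q).1 ω = ⊥ := by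
  unfold tqlF
  by_cases h : ω ∈ ({ω | (F (MSp.mbot Ω)).1 ω < ((q : ℝ) : EReal)} ∩
      {ω | ((q : ℝ) : EReal) < s.1 ω})
  · exact Or.inl ⟨pc_of_mem _ _ _ h, h.1, h.2⟩
  · exact Or.inr (pc_of_not_mem _ _ _ h)

lemma tqrF_cases (F : MSp Ω → MSp Ω) (s : MSp Ω) (q : ℚ) (ω : Ω) :
    ((tqrF F s q).1 ω = ((q : ℝ) : EReal) ∧ s.1 ω < ((q : ℝ) : EReal) ∧
      ((q : ℝ) : EReal) < (F (MSp.mtop Ω)).1 ω) ∨ (tqrF F s q).1 ω = ⊤ := by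
  unfold tqrF
  by_cases h : ω ∈ ({ω | s.1 ω < ((q : ℝ) : EReal)} ∩
      {ω | ((q : ℝ) : EReal) < (F (MSp.mtop Ω)).1 ω})
  · exact Or.inl ⟨pc_of_mem _ _ _ h, h.1, h.2⟩
  · exact Or.inr (pc_of_not_mem _ _ _ h)

end Extra


/-- Sandwich property of conditional inverses: if `F : M → M` is local, increasing and
respects a.e. equality, `Gl`, `Gr` are a conditional left- and right-inverse of `F` and
`G` is any conditional inverse of `F`, then `Gl(s) ≤ G(s) ≤ Gr(s)` a.e. for every `s`;
moreover every left-continuous version of `G` agrees a.e. with `Gl` and every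
right-continuous version of `G` agrees a.e. with `Gr`. -/
theorem condInverse_sandwich (P : Measure Ω) [IsProbabilityMeasure P]
    (F Gl Gr G : MSp Ω → MSp Ω)
    (hFloc : LocalAE P F) (hFinc : IncreasingAE P F) (hFae : RespectsAE P F)
    (hGl : IsCondLeftInv P F Gl) (hGr : IsCondRightInv P F Gr)
    (hG : IsCondInverse P F G) :
    (∀ s : MSp Ω, (Gl s).1 ≤ᵐ[P] (G s).1 ∧ (G s).1 ≤ᵐ[P] (Gr s).1) ∧
    (∀ Gm : MSp Ω → MSp Ω, IsLeftContVersion P G Gm →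
      ∀ s : MSp Ω, (Gm s).1 =ᵐ[P] (Gl s).1) ∧
    (∀ Gp : MSp Ω → MSp Ω, IsRightContVersion P G Gp →
      ∀ s : MSp Ω, (Gp s).1 =ᵐ[P] (Gr s).1) := by
  classical
  obtain ⟨hGloc, hGinc, hGae, hGmain⟩ := hG
  obtain ⟨Fm, hFm⟩ := exists_leftContVersion P F hFloc hFinc
  obtain ⟨Fp, hFp⟩ := exists_rightContVersion P F hFloc hFinc
  have hsandP : ∀ u : MSp Ω, ∀ᵐ ω ∂P, (F (MSp.mbot Ω)).1 ω < u.1 ω →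
      u.1 ω < (F (MSp.mtop Ω)).1 ω → u.1 ω ≤ (Fp (G u)).1 ω := by
    intro u
    filter_upwards [(hGmain Fm Fp hFm hFp u).1] with ω h hb ht
    exact (h hb ht).2
  have hsandM : ∀ u : MSp Ω, ∀ᵐ ω ∂P, (F (MSp.mbot Ω)).1 ω < u.1 ω →
      u.1 ω < (F (MSp.mtop Ω)).1 ω → (Fm (G u)).1 ω ≤ u.1 ω := by
    intro u
    filter_upwards [(hGmain Fm Fp hFm hFp u).1] with ω h hb ht
    exact (h hb ht).1
  have hGbot : ∀ u : MSp Ω, ∀ᵐ ω ∂P, u.1 ω < (F (MSp.mbot Ω)).1 ω → (G u).1 ω = ⊥ :=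
    fun u => (hGmain Fm Fp hFm hFp u).2.1
  have hGtop : ∀ u : MSp Ω, ∀ᵐ ω ∂P, (F (MSp.mtop Ω)).1 ω < u.1 ω → (G u).1 ω = ⊤ :=
    fun u => (hGmain Fm Fp hFm hFp u).2.2
  have hkeyP : ∀ t n : MSp Ω,
      (∀ᵐ ω ∂P, ω ∈ {ω' | (G t).1 ω' < ⊤} → (G t).1 ω < n.1 ω) →
      ∀ᵐ ω ∂P, (F (MSp.mbot Ω)).1 ω < t.1 ω → t.1 ω < (F (MSp.mtop Ω)).1 ω →
        (G t).1 ω < ⊤ → t.1 ω ≤ (F n).1 ω := fun t n hn => keyP hFp hsandP t n hn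
  have hkeyM : ∀ t n : MSp Ω,
      (∀ᵐ ω ∂P, ω ∈ {ω' | ⊥ < (G t).1 ω'} → n.1 ω < (G t).1 ω) →
      ∀ᵐ ω ∂P, (F (MSp.mbot Ω)).1 ω < t.1 ω → t.1 ω < (F (MSp.mtop Ω)).1 ω →
        ⊥ < (G t).1 ω → (F n).1 ω ≤ t.1 ω := fun t n hn => keyM hFm hsandM t n hn
  -- Part 1, left inequality
  have part1l : ∀ s : MSp Ω, (Gl s).1 ≤ᵐ[P] (G s).1 := by
    intro s
    obtain ⟨hGlc, g, hgInf, hgAgree⟩ := hGl s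
    have hwA : ∀ q : ℚ, (G (tqlF F s q)).1 ≤ᵐ[P] (G s).1 := by
      intro q
      refine hGinc _ s (Filter.Eventually.of_forall fun ω => ?_)
      rcases tqlF_cases F s q ω with ⟨hv, _, h2⟩ | hv
      · rw [hv]; exact h2.le
      · rw [hv]; exact bot_le
    have hα := lemA hFloc hFinc hkeyP s (G s) hwA hgInf
    filter_upwards [hα, hgAgree, hGlc, hGtop s] with ω hα hgAgree hGlc hGtop
    by_cases hA : s.1 ω ≤ (F (MSp.mtop Ω)).1 ω
    · rw [hgAgree hA]; exact hα
    · push_neg at hA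
      rw [hGlc (not_le.2 hA), hGtop hA]
  -- Part 1, right inequality
  have part1r : ∀ s : MSp Ω, (G s).1 ≤ᵐ[P] (Gr s).1 := by
    intro s
    obtain ⟨hGrc, g, hgSup, hgAgree⟩ := hGr s
    have hwA : ∀ q : ℚ, (G s).1 ≤ᵐ[P] (G (tqrF F s q)).1 := by
      intro q
      refine hGinc s _ (Filter.Eventually.of_forall fun ω => ?_)
      rcases tqrF_cases F s q ω with ⟨hv, h2, _⟩ | hv
      · rw [hv]; exact h2.le
      · rw [hv]; exact le_top
    have hα := lemA' hFloc hFinc hkeyM s (G s) hwA hgSup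
    filter_upwards [hα, hgAgree, hGrc, hGbot s] with ω hα hgAgree hGrc hGbot
    by_cases hB : (F (MSp.mbot Ω)).1 ω ≤ s.1 ω
    · rw [hgAgree hB]; exact hα
    · push_neg at hB
      rw [hGrc (not_le.2 hB), hGbot hB]
  refine ⟨fun s => ⟨part1l s, part1r s⟩, ?_, ?_⟩
  -- Part 2
  · intro Gm hGmv s
    obtain ⟨hGlc, g, hgInf, hgAgree⟩ := hGl s
    obtain ⟨hGmbot, gh, hghSup, hghAgree⟩ := hGmv s
    have htqlF_mem : ∀ q : ℚ, tqlF F s q ∈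
        {n : MSp Ω | ∀ᵐ ω ∂P, ω ∈ {ω' | ⊥ < s.1 ω'} → n.1 ω < s.1 ω} := by
      intro q
      simp only [Set.mem_setOf_eq]
      refine Filter.Eventually.of_forall fun ω hω => ?_
      rcases tqlF_cases F s q ω with ⟨hv, _, h2⟩ | hv
      · rw [hv]; exact h2
      · rw [hv]; exact hω
    have hα : g.1 ≤ᵐ[P] gh.1 := by
      refine lemA hFloc hFinc hkeyP s gh (fun q => ?_) hgInf
      exact hghSup.1 _ (Set.mem_image_of_mem G (htqlF_mem q))
    set R : Set Ω := {ω | s.1 ω ≤ (F (MSp.mtop Ω)).1 ω} ∩ {ω | ⊥ < s.1 ω} with hRdef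
    have hR : MeasurableSet R := (measurableSet_le s.2 (F (MSp.mtop Ω)).2).inter
      (measurableSet_lt measurable_const s.2)
    have hGtle : ∀ f ∈ G ''
        {n : MSp Ω | ∀ᵐ ω ∂P, ω ∈ {ω' | ⊥ < s.1 ω'} → n.1 ω < s.1 ω},
        f.1 ≤ᵐ[P] (MSp.pc R hR g (MSp.mtop Ω)).1 := by
      rintro f ⟨t, htfam, rfl⟩
      have hBt : ∀ m' ∈ {m : MSp Ω | ∀ᵐ ω ∂P,
          ω ∈ {ω' | s.1 ω' ≤ (F (MSp.mtop Ω)).1 ω'} → s.1 ω ≤ (F m).1 ω},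
          (MSp.pc R hR (G t) g).1 ≤ᵐ[P] m'.1 := by
        intro m' hm'
        have hB := lemB hFloc hFinc hkeyM hGinc s t m' (hGbot t) htfam hm'
        filter_upwards [hB, hgInf.1 m' hm'] with ω h1 h2
        by_cases hω : ω ∈ R
        · rw [pc_of_mem hR _ _ hω]; exact h1 hω.1 hω.2
        · rw [pc_of_not_mem hR _ _ hω]; exact h2
      have hle := hgInf.2 _ hBt
      filter_upwards [hle] with ω hle
      by_cases hω : ω ∈ R
      · rw [pc_of_mem hR _ _ hω]
        rwa [pc_of_mem hR _ _ hω] at hle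
      · rw [pc_of_not_mem hR _ _ hω]; exact le_top
    have hβ := hghSup.2 _ hGtle
    have hγ : ∀ᵐ ω ∂P, (F (MSp.mtop Ω)).1 ω < s.1 ω → gh.1 ω = ⊤ := by
      have huq : ∀ q : ℚ, ∀ᵐ ω ∂P,
          ((F (MSp.mtop Ω)).1 ω < ((q : ℝ) : EReal) ∧ ((q : ℝ) : EReal) < s.1 ω) →
          gh.1 ω = ⊤ := by
        intro q
        set U : Set Ω := {ω | (F (MSp.mtop Ω)).1 ω < ((q : ℝ) : EReal)} ∩
          {ω | ((q : ℝ) : EReal) < s.1 ω} with hUdef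
        have hU : MeasurableSet U := (measurableSet_lt (F (MSp.mtop Ω)).2
          measurable_const).inter (measurableSet_lt measurable_const s.2)
        have humem : MSp.pc U hU (ratCst Ω q) (MSp.mbot Ω) ∈
            {n : MSp Ω | ∀ᵐ ω ∂P, ω ∈ {ω' | ⊥ < s.1 ω'} → n.1 ω < s.1 ω} := by
          simp only [Set.mem_setOf_eq]
          refine Filter.Eventually.of_forall fun ω hω => ?_
          by_cases hωU : ω ∈ U
          · rw [pc_of_mem hU _ _ hωU]; exact hωU.2
          · rw [pc_of_not_mem hU _ _ hωU]; exact hω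
        have h1 := hghSup.1 _ (Set.mem_image_of_mem G humem)
        have h2 := hGtop (MSp.pc U hU (ratCst Ω q) (MSp.mbot Ω))
        filter_upwards [h1, h2] with ω h1 h2 hmem
        have huv : (MSp.pc U hU (ratCst Ω q) (MSp.mbot Ω)).1 ω = ((q : ℝ) : EReal) :=
          pc_of_mem hU _ _ ⟨hmem.1, hmem.2⟩
        have hGu : (G (MSp.pc U hU (ratCst Ω q) (MSp.mbot Ω))).1 ω = ⊤ :=
          h2 (by rw [huv]; exact hmem.1)
        rw [hGu] at h1
        exact top_le_iff.1 h1
      filter_upwards [MeasureTheory.ae_all_iff.2 huq] with ω h hFt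
      obtain ⟨q, h1, h2⟩ := EReal.exists_rat_btwn_of_lt hFt
      exact h q ⟨h1, h2⟩
    have hδ := lemC hFloc s hgInf
    filter_upwards [hα, hβ, hγ, hδ, hGmbot, hghAgree, hGlc, hgAgree]
      with ω hα hβ hγ hδ hGmbot hghAgree hGlc hgAgree
    by_cases hA : s.1 ω ≤ (F (MSp.mtop Ω)).1 ω
    · rw [hgAgree hA]
      by_cases hs : ⊥ < s.1 ω
      · rw [hghAgree hs]
        refine le_antisymm ?_ hα
        rwa [pc_of_mem hR _ _ ⟨hA, hs⟩] at hβ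
      · have hsbot : s.1 ω = ⊥ := le_bot_iff.1 (not_lt.1 hs)
        rw [hGmbot hsbot, hδ (by rw [hsbot]; exact bot_le)]
    · push_neg at hA
      have hs : ⊥ < s.1 ω := bot_le.trans_lt hA
      rw [hGlc (not_le.2 hA), hghAgree hs, hγ hA]
  -- Part 3
  · intro Gp hGpv s
    obtain ⟨hGrc, gr, hgrSup, hgrAgree⟩ := hGr s
    obtain ⟨hGptop, gp, hgpInf, hgpAgree⟩ := hGpv s
    have htqrF_mem : ∀ q : ℚ, tqrF F s q ∈
        {n : MSp Ω | ∀ᵐ ω ∂P, ω ∈ {ω' | s.1 ω' < ⊤} → s.1 ω < n.1 ω} := by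
      intro q
      simp only [Set.mem_setOf_eq]
      refine Filter.Eventually.of_forall fun ω hω => ?_
      rcases tqrF_cases F s q ω with ⟨hv, h2, _⟩ | hv
      · rw [hv]; exact h2
      · rw [hv]; exact hω
    have hα : gp.1 ≤ᵐ[P] gr.1 := by
      refine lemA' hFloc hFinc hkeyM s gp (fun q => ?_) hgrSup
      exact hgpInf.1 _ (Set.mem_image_of_mem G (htqrF_mem q))
    set R : Set Ω := {ω | (F (MSp.mbot Ω)).1 ω ≤ s.1 ω} ∩ {ω | s.1 ω < ⊤} with hRdef
    have hR : MeasurableSet R := (measurableSet_le (F (MSp.mbot Ω)).2 s.2).inter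
      (measurableSet_lt s.2 measurable_const)
    have hGtge : ∀ f ∈ G ''
        {n : MSp Ω | ∀ᵐ ω ∂P, ω ∈ {ω' | s.1 ω' < ⊤} → s.1 ω < n.1 ω},
        (MSp.pc R hR gr (MSp.mbot Ω)).1 ≤ᵐ[P] f.1 := by
      rintro f ⟨t, htfam, rfl⟩
      have hBt : ∀ m' ∈ {m : MSp Ω | ∀ᵐ ω ∂P,
          ω ∈ {ω' | (F (MSp.mbot Ω)).1 ω' ≤ s.1 ω'} → (F m).1 ω ≤ s.1 ω},
          m'.1 ≤ᵐ[P] (MSp.pc R hR (G t) gr).1 := by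
        intro m' hm'
        have hB := lemB' hFloc hFinc hkeyP hGinc s t m' (hGtop t) htfam hm'
        filter_upwards [hB, hgrSup.1 m' hm'] with ω h1 h2
        by_cases hω : ω ∈ R
        · rw [pc_of_mem hR _ _ hω]; exact h1 hω.1 hω.2
        · rw [pc_of_not_mem hR _ _ hω]; exact h2
      have hle := hgrSup.2 _ hBt
      filter_upwards [hle] with ω hle
      by_cases hω : ω ∈ R
      · rw [pc_of_mem hR _ _ hω]
        rwa [pc_of_mem hR _ _ hω] at hle
      · rw [pc_of_not_mem hR _ _ hω]; exact bot_le
    have hβ := hgpInf.2 _ hGtge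
    have hγ : ∀ᵐ ω ∂P, s.1 ω < (F (MSp.mbot Ω)).1 ω → gp.1 ω = ⊥ := by
      have huq : ∀ q : ℚ, ∀ᵐ ω ∂P,
          (s.1 ω < ((q : ℝ) : EReal) ∧ ((q : ℝ) : EReal) < (F (MSp.mbot Ω)).1 ω) →
          gp.1 ω = ⊥ := by
        intro q
        set U : Set Ω := {ω | s.1 ω < ((q : ℝ) : EReal)} ∩
          {ω | ((q : ℝ) : EReal) < (F (MSp.mbot Ω)).1 ω} with hUdef
        have hU : MeasurableSet U := (measurableSet_lt s.2 measurable_const).inter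
          (measurableSet_lt measurable_const (F (MSp.mbot Ω)).2)
        have humem : MSp.pc U hU (ratCst Ω q) (MSp.mtop Ω) ∈
            {n : MSp Ω | ∀ᵐ ω ∂P, ω ∈ {ω' | s.1 ω' < ⊤} → s.1 ω < n.1 ω} := by
          simp only [Set.mem_setOf_eq]
          refine Filter.Eventually.of_forall fun ω hω => ?_
          by_cases hωU : ω ∈ U
          · rw [pc_of_mem hU _ _ hωU]; exact hωU.1
          · rw [pc_of_not_mem hU _ _ hωU]; exact hω
        have h1 := hgpInf.1 _ (Set.mem_image_of_mem G humem)
        have h2 := hGbot (MSp.pc U hU (ratCst Ω q) (MSp.mtop Ω))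
        filter_upwards [h1, h2] with ω h1 h2 hmem
        have huv : (MSp.pc U hU (ratCst Ω q) (MSp.mtop Ω)).1 ω = ((q : ℝ) : EReal) :=
          pc_of_mem hU _ _ ⟨hmem.1, hmem.2⟩
        have hGu : (G (MSp.pc U hU (ratCst Ω q) (MSp.mtop Ω))).1 ω = ⊥ :=
          h2 (by rw [huv]; exact hmem.2)
        rw [hGu] at h1
        exact le_bot_iff.1 h1
      filter_upwards [MeasureTheory.ae_all_iff.2 huq] with ω h hFb
      obtain ⟨q, h1, h2⟩ := EReal.exists_rat_btwn_of_lt hFb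
      exact h q ⟨h1, h2⟩
    have hδ := lemC' hFloc s hgrSup
    filter_upwards [hα, hβ, hγ, hδ, hGptop, hgpAgree, hGrc, hgrAgree]
      with ω hα hβ hγ hδ hGptop hgpAgree hGrc hgrAgree
    by_cases hB : (F (MSp.mbot Ω)).1 ω ≤ s.1 ω
    · rw [hgrAgree hB]
      by_cases hs : s.1 ω < ⊤
      · rw [hgpAgree hs]
        refine le_antisymm hα ?_
        rwa [pc_of_mem hR _ _ ⟨hB, hs⟩] at hβ
      · have hstop : s.1 ω = ⊤ := top_le_iff.1 (not_lt.1 hs)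
        rw [hGptop hstop, hδ (by rw [hstop]; exact le_top)]
    · push_neg at hB
      have hs : s.1 ω < ⊤ := hB.trans_le le_top
      rw [hGrc (not_le.2 hB), hgpAgree hs, hγ hB]
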